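/- Let p : (X̃, x̃₀) → (X, x₀) be a semicovering map with X̃ path connected. Then the fundamental group π₁(X, x₀) acts on the fiber Y = p⁻¹(x₀) by [α]·x̃ = α̃(1), where α̃ is the unique lift of the loop α starting at x̃, and the stabilizer of x̃₀ under this action equals p₊(π₁(X̃, x̃₀)). Consequently |Y| = [π₁(X, x₀) : p₊(π₁(X̃, x̃₀))]. -/

import Mathlib

universe u_1 u_2
open unitInterval

/-- `p` has the path lifting property. -/
def PathLifting {X' X : Type*} [TopologicalSpace X'] [TopologicalSpace X]
    (p : X' → X) : Prop :=
  ∀ (f : C(I, X)) (x'₀ : X'), p x'₀ = f 0 →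
    ∃ g : C(I, X'), (∀ t, p (g t) = f t) ∧ g 0 = x'₀

/-- `p` has the unique path lifting property. -/
def UniquePathLifting {X' X : Type*} [TopologicalSpace X'] [TopologicalSpace X]
    (p : X' → X) : Prop :=
  ∀ g₁ g₂ : C(I, X'), (∀ t, p (g₁ t) = p (g₂ t)) → g₁ 0 = g₂ 0 → g₁ = g₂

attribute [local instance] Path.Homotopic.setoid

open Set Filter Topology

namespace Stmt12
noncomputable section
variable {X' : Type u_1} {X : Type u_2} [TopologicalSpace X'] [TopologicalSpace X]
  {p : X' → X}

def lift (hpl : PathLifting p) (f : C(I,X)) (x' : X') (h : p x' = f 0) : C(I, X') :=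
  (hpl f x' h).choose

lemma lift_lifts (hpl : PathLifting p) (f : C(I,X)) (x' : X') (h : p x' = f 0) :
    ∀ t, p (lift hpl f x' h t) = f t := (hpl f x' h).choose_spec.1

lemma lift_zero (hpl : PathLifting p) (f : C(I,X)) (x' : X') (h : p x' = f 0) :
    lift hpl f x' h 0 = x' := (hpl f x' h).choose_spec.2

lemma lift_eq (hpl : PathLifting p) (hupl : UniquePathLifting p) (f : C(I,X)) (x' : X')
    (h : p x' = f 0) (g : C(I,X')) (hg : ∀ t, p (g t) = f t) (hg0 : g 0 = x') :
    g = lift hpl f x' h :=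
  hupl g _ (fun t => by rw [hg, lift_lifts hpl]) (by rw [hg0, lift_zero])

lemma locconst (hp : IsLocalHomeomorph p) (hpl : PathLifting p) (hupl : UniquePathLifting p)
    (x' : X') (γ : I → C(I,X)) (hγ : Continuous γ)
    (hγ0 : ∀ s, p x' = γ s 0) (hγ1 : ∀ s s', γ s 1 = γ s' 1) (s₀ : I) :
    ∀ᶠ s in nhds s₀, lift hpl (γ s) x' (hγ0 s) 1 = lift hpl (γ s₀) x' (hγ0 s₀) 1 := by
  classical
  set L : C(I,X') := lift hpl (γ s₀) x' (hγ0 s₀) with hLdef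
  have hLl : ∀ t, p (L t) = γ s₀ t := lift_lifts hpl _ _ _
  choose e he₁ he₂ using hp
  set T : I → Set I := fun t => L ⁻¹' (e (L t)).source with hT
  have hTopen : ∀ t, IsOpen (T t) := fun t => (e (L t)).open_source.preimage L.continuous
  have hTmem : ∀ t, t ∈ T t := fun t => by
    simpa [hT] using he₁ (L t)
  obtain ⟨δ, hδ, hball⟩ := lebesgue_number_lemma_of_metric isCompact_univ hTopen
    (fun t _ => mem_iUnion.2 ⟨t, hTmem t⟩)
  obtain ⟨n, hn⟩ := exists_nat_one_div_lt hδ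
  set N := n + 1 with hNdef
  have hN0 : 0 < (N:ℝ) := by positivity
  have hn' : 1 / (N:ℝ) < δ := by
    rw [hNdef]; push_cast; exact hn
  set a : ℕ → I := fun i => ⟨min ((i:ℝ)/N) 1, ⟨le_min (by positivity) zero_le_one, min_le_right _ _⟩⟩
    with ha
  have haval : ∀ i, i ≤ N → ((a i : I) : ℝ) = (i:ℝ)/N := fun i hi => min_eq_left (by
    rw [div_le_one hN0]; exact_mod_cast hi)
  have hamono : Monotone a := fun i j hij => by
    apply Subtype.mk_le_mk.2
    gcongr
  have ha0 : a 0 = 0 := by ext; simp [ha]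
  have haN : a N = 1 := by ext; simp [ha, div_self hN0.ne']
  have hch : ∀ i : ℕ, ∃ t, Metric.ball (a i) δ ⊆ T t := fun i => hball (a i) trivial
  set E : ℕ → OpenPartialHomeomorph X' X := fun i => e (L (hch i).choose) with hE
  have hpE : ∀ i, p = ⇑(E i) := fun i => he₂ _
  have hseg : ∀ i, i < N → ∀ u ∈ Set.Icc (a i) (a (i+1)), L u ∈ (E i).source := by
    intro i hi u hu
    refine (hch i).choose_spec ?_
    have h1 : ((a i : I):ℝ) = (i:ℝ)/N := haval i hi.le
    have h2 : ((a (i+1) : I):ℝ) = ((i:ℝ)+1)/N := by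
      rw [haval _ hi]; push_cast; ring
    have hu1 : ((a i : I):ℝ) ≤ (u:ℝ) := hu.1
    have hu2 : (u:ℝ) ≤ ((a (i+1) : I):ℝ) := hu.2
    rw [Metric.mem_ball, Subtype.dist_eq, Real.dist_eq, abs_sub_lt_iff]
    have key : ((i:ℝ)+1)/N - (i:ℝ)/N = 1/N := by field_simp; ring
    constructor
    · rw [h1]; rw [h1] at hu1; rw [h2] at hu2; linarith
    · rw [h1]; rw [h1] at hu1; linarith
  have hIccmem : ∀ i, a i ∈ Set.Icc (a i) (a (i+1)) := fun i =>
    ⟨le_rfl, hamono (Nat.le_succ i)⟩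
  have hIccmem' : ∀ i, a (i+1) ∈ Set.Icc (a i) (a (i+1)) := fun i =>
    ⟨hamono (Nat.le_succ i), le_rfl⟩
  have hγs₀mem : ∀ i, i < N → ∀ u ∈ Set.Icc (a i) (a (i+1)), γ s₀ u ∈ (E i).target := by
    intro i hi u hu
    have : γ s₀ u = (E i) (L u) := by rw [← hLl u, hpE i]
    rw [this]
    exact (E i).map_source (hseg i hi u hu)
  have cond1 : ∀ i ∈ Finset.range N, ∀ᶠ s in nhds s₀,
      Set.MapsTo (γ s) (Set.Icc (a i) (a (i+1))) (E i).target := by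
    intro i hi
    rw [Finset.mem_range] at hi
    have hopen : IsOpen {g : C(I,X) | Set.MapsTo g (Set.Icc (a i) (a (i+1))) (E i).target} :=
      ContinuousMap.isOpen_setOf_mapsTo isClosed_Icc.isCompact (E i).open_target
    have hmem : γ s₀ ∈ {g : C(I,X) | Set.MapsTo g (Set.Icc (a i) (a (i+1))) (E i).target} :=
      fun u hu => hγs₀mem i hi u hu
    have := hγ.continuousAt (x := s₀) |>.preimage_mem_nhds (hopen.mem_nhds hmem)
    exact Filter.eventually_iff.2 this
  have cond2 : ∀ i ∈ Finset.range N, ∀ᶠ s in nhds s₀,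
      1 ≤ i → (E (i-1)).symm (γ s (a i)) ∈ (E i).source := by
    intro i hi
    rw [Finset.mem_range] at hi
    rcases Nat.eq_zero_or_pos i with h0 | h1
    · subst h0; filter_upwards with s h; omega
    · have hi' : i - 1 < N := lt_of_le_of_lt (Nat.sub_le _ _) hi
      have hsub : i - 1 + 1 = i := Nat.succ_pred_eq_of_pos h1
      have haIcc : a i ∈ Set.Icc (a (i-1)) (a (i-1+1)) := by
        rw [hsub]; exact ⟨hamono (Nat.sub_le _ _), le_rfl⟩
      have hLmem : L (a i) ∈ (E (i-1)).source := hseg (i-1) hi' (a i) haIcc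
      have hγform : γ s₀ (a i) = (E (i-1)) (L (a i)) := by rw [← hLl, hpE (i-1)]
      have hval : (E (i-1)).symm (γ s₀ (a i)) = L (a i) := by
        rw [hγform, (E (i-1)).left_inv hLmem]
      have hLs : L (a i) ∈ (E i).source := hseg i hi (a i) (hIccmem i)
      have hcont : ContinuousAt (fun s => (E (i-1)).symm (γ s (a i))) s₀ := by
        apply ContinuousAt.comp
        · exact (E (i-1)).continuousAt_symm (by rw [hγform]; exact (E (i-1)).map_source hLmem)
        · exact ((continuous_eval_const (a i)).comp hγ).continuousAt
      have := hcont.preimage_mem_nhds ((E i).open_source.mem_nhds (by rw [hval]; exact hLs))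
      filter_upwards [Filter.eventually_iff.2 this] with s hs _
      exact hs
  have main : ∀ s, (∀ i ∈ Finset.range N, Set.MapsTo (γ s) (Set.Icc (a i) (a (i+1))) (E i).target) →
      (∀ i ∈ Finset.range N, 1 ≤ i → (E (i-1)).symm (γ s (a i)) ∈ (E i).source) →
      ∀ i, i ≤ N → 1 ≤ i → lift hpl (γ s) x' (hγ0 s) (a i) = (E (i-1)).symm (γ s (a i)) := by
    intro s C1 C2 i
    induction i with
    | zero => intro _ h; omega
    | succ j ihj =>
      intro hjN _
      have hjN' : j < N := hjN
      set Ls := lift hpl (γ s) x' (hγ0 s) with hLs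
      have hstart : Ls (a j) = (E j).symm (γ s (a j)) := by
        rcases Nat.eq_zero_or_pos j with h0 | h1
        · subst h0
          have hz : Ls (a 0) = x' := by rw [ha0]; exact lift_zero hpl _ _ _
          have hLz : L (a 0) = x' := by rw [ha0]; exact lift_zero hpl _ _ _
          have hx'mem : x' ∈ (E 0).source := hLz ▸ hseg 0 hjN' (a 0) (hIccmem 0)
          have hγz : γ s (a 0) = (E 0) x' := by rw [ha0, ← hγ0 s, hpE 0]
          rw [hz, hγz, (E 0).left_inv hx'mem]
        · have h1' := ihj hjN'.le h1
          have hmem := C2 j (Finset.mem_range.2 hjN') h1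
          have hj1 : j - 1 < N := lt_of_le_of_lt (Nat.sub_le _ _) hjN'
          have hsub : j - 1 + 1 = j := Nat.succ_pred_eq_of_pos h1
          have hyt : γ s (a j) ∈ (E (j-1)).target := by
            refine C1 (j-1) (Finset.mem_range.2 hj1) ?_
            rw [hsub]; exact ⟨hamono (Nat.sub_le _ _), le_rfl⟩
          have hEj : (E j) ((E (j-1)).symm (γ s (a j))) = γ s (a j) := by
            rw [← hpE j, hpE (j-1), (E (j-1)).right_inv hyt]
          rw [h1']
          conv_rhs => rw [← hEj, (E j).left_inv hmem]
      have hrval : ∀ u : I, ((j:ℝ) + u)/N ∈ Set.Icc (0:ℝ) 1 := by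
        intro u
        have hu1 : (u:ℝ) ≤ 1 := u.2.2
        have hu0 : (0:ℝ) ≤ u := u.2.1
        have hjr : (j:ℝ) + 1 ≤ N := by exact_mod_cast hjN'
        constructor
        · positivity
        · rw [div_le_one hN0]; linarith
      set r : C(I, I) := ⟨fun u => ⟨((j:ℝ) + u)/N, hrval u⟩,
        Continuous.subtype_mk ((continuous_const.add continuous_subtype_val).div_const _) _⟩
        with hr
      have hr0 : r 0 = a j := by
        apply Subtype.ext
        show ((j:ℝ) + ((0:I):ℝ))/N = _
        rw [haval j hjN'.le]
        norm_num
      have hr1 : r 1 = a (j+1) := by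
        apply Subtype.ext
        show ((j:ℝ) + ((1:I):ℝ))/N = _
        rw [haval (j+1) hjN]
        push_cast
        norm_num
      have hrIcc : ∀ u, r u ∈ Set.Icc (a j) (a (j+1)) := by
        intro u
        have hu1 : (u:ℝ) ≤ 1 := u.2.2
        have hu0 : (0:ℝ) ≤ u := u.2.1
        constructor
        · apply Subtype.mk_le_mk.2
          refine le_trans (min_le_left _ _) ?_
          gcongr
          linarith
        · apply Subtype.mk_le_mk.2
          refine le_min ?_ (hrval u).2
          gcongr
          push_cast
          linarith
      have hC1j := C1 j (Finset.mem_range.2 hjN')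
      have g2cont : Continuous (fun u : I => (E j).symm (γ s (r u))) :=
        (E j).continuousOn_symm.comp_continuous ((γ s).continuous.comp r.continuous)
          (fun u => hC1j (hrIcc u))
      set g₂ : C(I, X') := ⟨fun u => (E j).symm (γ s (r u)), g2cont⟩ with hg₂
      have hEq : Ls.comp r = g₂ := by
        apply hupl
        · intro u
          show p (Ls (r u)) = p ((E j).symm (γ s (r u)))
          rw [lift_lifts hpl]
          conv_rhs => rw [hpE j]
          rw [(E j).right_inv (hC1j (hrIcc u))]
        · show Ls (r 0) = (E j).symm (γ s (r 0))
          rw [hr0, hstart]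
      have := congrArg (fun g : C(I,X') => g 1) hEq
      simp only [ContinuousMap.comp_apply] at this
      have h2' : g₂ 1 = (E j).symm (γ s (a (j+1))) := by
        show (E j).symm (γ s (r 1)) = _
        rw [hr1]
      rw [h2'] at this
      rw [hr1] at this
      simpa [Nat.succ_sub_one] using this
  have hall1 := (Filter.eventually_all_finset (Finset.range N)).2 cond1
  have hall2 := (Filter.eventually_all_finset (Finset.range N)).2 cond2
  have hs01 := hall1.self_of_nhds
  have hs02 := hall2.self_of_nhds
  have hN1 : 1 ≤ N := Nat.succ_le_succ (Nat.zero_le n)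
  filter_upwards [hall1, hall2] with s h1 h2
  have e1 := main s h1 h2 N le_rfl hN1
  have e2 := main s₀ hs01 hs02 N le_rfl hN1
  rw [haN] at e1 e2
  rw [e1, e2, hγ1 s s₀]

lemma endpoint_eq (hpl : PathLifting p) (hupl : UniquePathLifting p) (hp : IsLocalHomeomorph p)
    {x₀ x₁ : X} (x' : X') {α β : Path x₀ x₁} (h : α.Homotopic β)
    (hα : p x' = α.toContinuousMap 0) (hβ : p x' = β.toContinuousMap 0) :
    lift hpl α.toContinuousMap x' hα 1 = lift hpl β.toContinuousMap x' hβ 1 := by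
  obtain ⟨F⟩ := h
  set γ : I → C(I,X) := fun s => (F.toHomotopy.toContinuousMap.curry) s with hγdef
  have hγ : Continuous γ := (F.toHomotopy.toContinuousMap.curry).continuous
  have hγs0 : ∀ s, γ s 0 = x₀ := fun s => F.source s
  have hγs1 : ∀ s, γ s 1 = x₁ := fun s => F.target s
  have hγ0 : ∀ s, p x' = γ s 0 := fun s => by rw [hγs0 s, hα]; exact α.source.symm ▸ rfl
  have hγ1 : ∀ s s', γ s 1 = γ s' 1 := fun s s' => by rw [hγs1, hγs1]
  set f : I → X' := fun s => lift hpl (γ s) x' (hγ0 s) 1 with hfdef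
  have hlc : IsLocallyConstant f := by
    rw [IsLocallyConstant.iff_exists_open]
    intro s₀
    obtain ⟨U, hUs, hUopen, hU⟩ := eventually_nhds_iff.1
      (locconst hp hpl hupl x' γ hγ hγ0 hγ1 s₀)
    exact ⟨U, hUopen, hU, fun s hs => hUs s hs⟩
  have h01 : f 0 = f 1 := hlc.apply_eq_of_preconnectedSpace 0 1
  have hγzero : γ 0 = α.toContinuousMap := ContinuousMap.ext fun t => F.apply_zero t
  have hγone : γ 1 = β.toContinuousMap := ContinuousMap.ext fun t => F.apply_one t
  have hf0 : f 0 = lift hpl α.toContinuousMap x' hα 1 := by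
    have := lift_eq hpl hupl α.toContinuousMap x' hα (lift hpl (γ 0) x' (hγ0 0))
      (fun t => by rw [lift_lifts hpl, hγzero]) (lift_zero hpl _ _ _)
    rw [hfdef]; exact congrArg (fun g : C(I,X') => g 1) this
  have hf1 : f 1 = lift hpl β.toContinuousMap x' hβ 1 := by
    have := lift_eq hpl hupl β.toContinuousMap x' hβ (lift hpl (γ 1) x' (hγ0 1))
      (fun t => by rw [lift_lifts hpl, hγone]) (lift_zero hpl _ _ _)
    rw [hfdef]; exact congrArg (fun g : C(I,X') => g 1) this
  rw [← hf0, ← hf1, h01]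

variable (hpl : PathLifting p)

lemma path_start' {x₀ x₁ : X} (α : Path x₀ x₁) (x' : X') (h : p x' = x₀) :
    p x' = α.toContinuousMap 0 := by
  rw [h]; exact α.source.symm ▸ rfl

/-- lift of a path -/
def plift {x₀ x₁ : X} (α : Path x₀ x₁) (x' : X') (h : p x' = x₀) : C(I, X') :=
  lift hpl α.toContinuousMap x' (path_start' α x' h)

lemma plift_lifts {x₀ x₁ : X} (α : Path x₀ x₁) (x' : X') (h : p x' = x₀) :
    ∀ t, p (plift hpl α x' h t) = α t := lift_lifts hpl _ _ _

lemma plift_zero {x₀ x₁ : X} (α : Path x₀ x₁) (x' : X') (h : p x' = x₀) :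
    plift hpl α x' h 0 = x' := lift_zero hpl _ _ _

lemma plift_one_mem {x₀ x₁ : X} (α : Path x₀ x₁) (x' : X') (h : p x' = x₀) :
    p (plift hpl α x' h 1) = x₁ := by rw [plift_lifts hpl α x' h 1, α.target]

lemma plift_unique (hupl : UniquePathLifting p) {x₀ x₁ : X} (α : Path x₀ x₁) (x' : X')
    (h : p x' = x₀) (g : C(I,X')) (hg : ∀ t, p (g t) = α t) (hg0 : g 0 = x') :
    g = plift hpl α x' h := lift_eq hpl hupl _ _ _ g hg hg0

lemma plift_homotopic (hupl : UniquePathLifting p) (hp : IsLocalHomeomorph p)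
    {x₀ x₁ : X} {α β : Path x₀ x₁} (h : α.Homotopic β) (x' : X') (hx : p x' = x₀) :
    plift hpl α x' hx 1 = plift hpl β x' hx 1 :=
  endpoint_eq hpl hupl hp x' h _ _

lemma plift_refl (hupl : UniquePathLifting p) {x₀ : X} (x' : X') (hx : p x' = x₀) :
    plift hpl (Path.refl x₀) x' hx 1 = x' := by
  have := plift_unique hpl hupl (Path.refl x₀) x' hx (ContinuousMap.const I x')
    (fun t => by simpa using hx) rfl
  rw [← this]; rfl

lemma plift_trans (hupl : UniquePathLifting p) {x₀ x₁ x₂ : X} (α : Path x₀ x₁) (β : Path x₁ x₂)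
    (x' : X') (hx : p x' = x₀) :
    plift hpl (α.trans β) x' hx 1 =
      plift hpl β (plift hpl α x' hx 1) (plift_one_mem hpl α x' hx) 1 := by
  set A := plift hpl α x' hx with hA
  set B := plift hpl β (A 1) (plift_one_mem hpl α x' hx) with hB
  set A' : Path x' (A 1) := ⟨A, plift_zero hpl _ _ _, rfl⟩ with hA'
  set B' : Path (A 1) (B 1) := ⟨B, plift_zero hpl _ _ _, rfl⟩ with hB'
  have hC := plift_unique hpl hupl (α.trans β) x' hx (A'.trans B').toContinuousMap
    (fun t => by
      show p ((A'.trans B') t) = (α.trans β) t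
      rw [Path.trans_apply, Path.trans_apply]
      split_ifs with h
      · exact plift_lifts hpl α x' hx _
      · exact plift_lifts hpl β (A 1) (plift_one_mem hpl α x' hx) _)
    ((A'.trans B').source)
  have := congrArg (fun g : C(I,X') => g 1) hC
  rw [← this]
  exact (A'.trans B').target


attribute [local instance] Path.Homotopic.setoid

/-- the monodromy action of a homotopy class of loops on the fiber -/
def act0 (hupl : UniquePathLifting p) (hp : IsLocalHomeomorph p) {x₀ : X}
    (q : Path.Homotopic.Quotient x₀ x₀) (y : p ⁻¹' {x₀}) : p ⁻¹' {x₀} :=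
  Quotient.lift
    (fun α : Path x₀ x₀ => (⟨plift hpl α y y.2 1, plift_one_mem hpl α y y.2⟩ : p ⁻¹' {x₀}))
    (fun α β hab => Subtype.ext (plift_homotopic hpl hupl hp hab y y.2)) q

lemma act0_mk (hupl : UniquePathLifting p) (hp : IsLocalHomeomorph p) {x₀ : X}
    (α : Path x₀ x₀) (y : p ⁻¹' {x₀}) :
    act0 hpl hupl hp ⟦α⟧ y = ⟨plift hpl α y y.2 1, plift_one_mem hpl α y y.2⟩ := rfl

lemma act0_comp (hupl : UniquePathLifting p) (hp : IsLocalHomeomorph p) {x₀ : X}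
    (q r : Path.Homotopic.Quotient x₀ x₀) (y : p ⁻¹' {x₀}) :
    act0 hpl hupl hp (q.trans r) y = act0 hpl hupl hp r (act0 hpl hupl hp q y) := by
  induction q using Quotient.inductionOn with | h α =>
  induction r using Quotient.inductionOn with | h β =>
  change act0 hpl hupl hp ⟦α.trans β⟧ y = _
  apply Subtype.ext
  exact plift_trans hpl hupl α β y y.2

lemma act0_one (hupl : UniquePathLifting p) (hp : IsLocalHomeomorph p) {x₀ : X}
    (y : p ⁻¹' {x₀}) : act0 hpl hupl hp ⟦Path.refl x₀⟧ y = y :=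
  Subtype.ext (plift_refl hpl hupl y y.2)


end
end Stmt12

attribute [local instance] Path.Homotopic.setoid


open Stmt12

/-- for a semicovering `p : (X', x'₀) → (X, x₀)` with `X'` path
connected, the fundamental group `π₁(X, x₀)` acts on the fiber `Y = p⁻¹(x₀)`
by `[α] · x' = α'(1)` where `α'` is the unique lift of `α` starting at `x'`;
the stabilizer of `x'₀` is `p₊(π₁(X', x'₀))` (formalized as the subgroup `H`
of classes of loops of the form `p ∘ α'`), and `|Y| = [π₁(X, x₀) : H]`. -/
theorem stmt_12 {X' : Type u_1} {X : Type u_2} [TopologicalSpace X'] [TopologicalSpace X]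
    [PathConnectedSpace X'] (p : X' → X) (hp : IsLocalHomeomorph p)
    (hpl : PathLifting p) (hupl : UniquePathLifting p)
    (x'₀ : X') (x₀ : X) (hx'₀ : p x'₀ = x₀)
    (H : Subgroup (FundamentalGroup X x₀))
    (hH : ∀ g : FundamentalGroup X x₀, g ∈ H ↔
      ∃ α' : Path x'₀ x'₀, g = FundamentalGroup.fromPath (X := TopCat.of X)
        ⟦(α'.map hp.continuous).cast hx'₀.symm hx'₀.symm⟧) :
    ∃ act : FundamentalGroup X x₀ →* Equiv.Perm (p ⁻¹' {x₀}),
      (∀ (α : Path x₀ x₀) (x' : p ⁻¹' {x₀}) (α' : C(unitInterval, X')),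
        (∀ t, p (α' t) = α t) → α' 0 = (x' : X') →
          ((act (FundamentalGroup.fromPath (X := TopCat.of X) ⟦α⟧) x' : X') = α' 1)) ∧
      (∀ g : FundamentalGroup X x₀,
        act g ⟨x'₀, by simpa using hx'₀⟩ = ⟨x'₀, by simpa using hx'₀⟩ ↔ g ∈ H) ∧
      Cardinal.lift.{u_2} (Cardinal.mk (p ⁻¹' {x₀})) =
        Cardinal.lift.{u_1} (Cardinal.mk (FundamentalGroup X x₀ ⧸ H)) := by
  classical
  have hx'mem : x'₀ ∈ p ⁻¹' {x₀} := by simpa using hx'₀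
  set φ : FundamentalGroup X x₀ → (p ⁻¹' {x₀}) → (p ⁻¹' {x₀}) :=
    fun g y => act0 hpl hupl hp (FundamentalGroup.toPath (X := TopCat.of X) g) y with hφ
  have hφmul : ∀ g h y, φ (g * h) y = φ g (φ h y) := by
    intro g h y
    show act0 hpl hupl hp ((FundamentalGroup.toPath (X := TopCat.of X) h).trans
      (FundamentalGroup.toPath (X := TopCat.of X) g)) y = φ g (φ h y)
    rw [act0_comp]
  have hφone : ∀ y, φ 1 y = y := by
    intro y
    show act0 hpl hupl hp ⟦Path.refl x₀⟧ y = y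
    exact act0_one hpl hupl hp y
  have hφinv : ∀ g y, φ g⁻¹ (φ g y) = y := by
    intro g y
    have h1 := (hφmul g⁻¹ g y).symm
    rw [inv_mul_cancel] at h1
    exact h1.trans (hφone y)
  have hφinv' : ∀ g y, φ g (φ g⁻¹ y) = y := by
    intro g y
    have h1 := (hφmul g g⁻¹ y).symm
    rw [mul_inv_cancel] at h1
    exact h1.trans (hφone y)
  set act : FundamentalGroup X x₀ →* Equiv.Perm (p ⁻¹' {x₀}) :=
    { toFun := fun g => ⟨φ g, φ g⁻¹, hφinv g, hφinv' g⟩,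
      map_one' := Equiv.ext fun y => by simp [hφone]; exact hφone y,
      map_mul' := fun g h => Equiv.ext fun y => by
        simp only [Equiv.coe_fn_mk, Equiv.Perm.mul_apply]
        exact hφmul g h y } with hact
  have hact_apply : ∀ g y, act g y = φ g y := fun g y => rfl
  -- key property 1
  have prop1 : ∀ (α : Path x₀ x₀) (x' : p ⁻¹' {x₀}) (α' : C(unitInterval, X')),
      (∀ t, p (α' t) = α t) → α' 0 = (x' : X') →
        ((act (FundamentalGroup.fromPath (X := TopCat.of X) ⟦α⟧) x' : X') = α' 1) := by
    intro α x' α' hα' hα'0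
    rw [hact_apply]
    have h1 : φ (FundamentalGroup.fromPath (X := TopCat.of X) ⟦α⟧) x'
        = act0 hpl hupl hp ⟦α⟧ x' := rfl
    rw [h1, act0_mk]
    exact (congrArg (fun g : C(I,X') => g 1) (plift_unique hpl hupl α x' x'.2 α' hα' hα'0)).symm
  have prop2 : ∀ g : FundamentalGroup X x₀,
      act g ⟨x'₀, hx'mem⟩ = ⟨x'₀, hx'mem⟩ ↔ g ∈ H := by
    intro g
    constructor
    · intro hfix
      obtain ⟨α, hα⟩ := Quotient.exists_rep (FundamentalGroup.toPath (X := TopCat.of X) g)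
      have hg : g = FundamentalGroup.fromPath (X := TopCat.of X) ⟦α⟧ := by
        rw [hα]
      have hend : plift hpl α x'₀ hx'₀ 1 = x'₀ := by
        have h2 : act g ⟨x'₀, hx'mem⟩ = act0 hpl hupl hp ⟦α⟧ ⟨x'₀, hx'mem⟩ := by
          rw [hα]; rfl
        rw [h2, act0_mk] at hfix
        exact congrArg Subtype.val hfix
      set α' : Path x'₀ x'₀ :=
        ⟨plift hpl α x'₀ hx'₀, plift_zero hpl α x'₀ hx'₀, hend⟩ with hα'def
      refine (hH g).mpr ⟨α', ?_⟩
      have hpath : (α'.map hp.continuous).cast hx'₀.symm hx'₀.symm = α := by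
        ext t
        show ((α'.map hp.continuous).cast hx'₀.symm hx'₀.symm) t = α t
        rw [show ((α'.map hp.continuous).cast hx'₀.symm hx'₀.symm) t
              = p (plift hpl α x'₀ hx'₀ t) from rfl]
        exact plift_lifts hpl α x'₀ hx'₀ t
      rw [hpath, ← hg]
    · intro hg
      obtain ⟨α', hα'⟩ := (hH g).mp hg
      set β : Path x₀ x₀ := (α'.map hp.continuous).cast hx'₀.symm hx'₀.symm with hβ
      have h2 : act g ⟨x'₀, hx'mem⟩ = act0 hpl hupl hp ⟦β⟧ ⟨x'₀, hx'mem⟩ := by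
        rw [hα']; rfl
      rw [h2, act0_mk]
      apply Subtype.ext
      show plift hpl β x'₀ _ 1 = x'₀
      have hlift := plift_unique hpl hupl β x'₀ hx'₀ α'.toContinuousMap
        (fun t => rfl) α'.source
      rw [← hlift]
      exact α'.target
  refine ⟨act, prop1, fun g => prop2 g, ?_⟩
  -- cardinality via orbit-stabilizer
  letI : MulAction (FundamentalGroup X x₀) (p ⁻¹' {x₀}) := MulAction.compHom _ act
  have hsmul : ∀ (g : FundamentalGroup X x₀) (y : p ⁻¹' {x₀}), g • y = act g y :=
    fun g y => rfl
  have hstab : MulAction.stabilizer (FundamentalGroup X x₀) (⟨x'₀, hx'mem⟩ : p ⁻¹' {x₀}) = H := by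
    ext g
    rw [MulAction.mem_stabilizer_iff, hsmul]
    exact prop2 g
  have htrans : ∀ y : p ⁻¹' {x₀},
      y ∈ MulAction.orbit (FundamentalGroup X x₀) (⟨x'₀, hx'mem⟩ : p ⁻¹' {x₀}) := by
    intro y
    obtain ⟨δ⟩ := (PathConnectedSpace.joined x'₀ (y : X'))
    have hy2 : p (y : X') = x₀ := y.2
    set lam : Path x₀ x₀ := (δ.map hp.continuous).cast hx'₀.symm hy2.symm with hlam
    refine ⟨FundamentalGroup.fromPath (X := TopCat.of X) ⟦lam⟧, ?_⟩
    show act (FundamentalGroup.fromPath (X := TopCat.of X) ⟦lam⟧) ⟨x'₀, hx'mem⟩ = y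
    have h2 : act (FundamentalGroup.fromPath (X := TopCat.of X) ⟦lam⟧) ⟨x'₀, hx'mem⟩
        = act0 hpl hupl hp ⟦lam⟧ ⟨x'₀, hx'mem⟩ := rfl
    rw [h2, act0_mk]
    apply Subtype.ext
    show plift hpl lam x'₀ _ 1 = (y : X')
    have hlift := plift_unique hpl hupl lam x'₀ hx'₀ δ.toContinuousMap
      (fun t => rfl) δ.source
    rw [← hlift]
    exact δ.target
  have horb : MulAction.orbit (FundamentalGroup X x₀) (⟨x'₀, hx'mem⟩ : p ⁻¹' {x₀})
      = Set.univ := Set.eq_univ_iff_forall.2 htrans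
  rw [← hstab]
  refine Cardinal.lift_mk_eq'.mpr ⟨?_⟩
  exact ((Equiv.Set.univ _).symm.trans (Equiv.setCongr horb.symm)).trans
    (MulAction.orbitEquivQuotientStabilizer (FundamentalGroup X x₀) _)
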